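/- arXiv:1502.00605 — 5 statements merged into one kernel-verified Lean document; each statement's English description precedes it below -/
import Mathlib

section
/- Define integer sequences by x₀ = 4, x₁ = 4936, xₘ = 1298·xₘ₋₁ − xₘ₋₂ and y₀ = 1, y₁ = 1369, yₘ = 1298·yₘ₋₁ − yₘ₋₂. Then for all m ≥ 0, xₘ² − 13·yₘ² = 3. -/
theorem stmt7 (x y : ℕ → ℤ)
    (hx0 : x 0 = 4) (hx1 : x 1 = 4936)
    (hxr : ∀ m, x (m + 2) = 1298 * x (m + 1) - x m)
    (hy0 : y 0 = 1) (hy1 : y 1 = 1369)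
    (hyr : ∀ m, y (m + 2) = 1298 * y (m + 1) - y m) :
    ∀ m, (x m) ^ 2 - 13 * (y m) ^ 2 = 3 := by
  have key : ∀ m, (x m) ^ 2 - 13 * (y m) ^ 2 = 3 ∧
      (x (m + 1)) ^ 2 - 13 * (y (m + 1)) ^ 2 = 3 ∧
      x (m + 1) * x m - 13 * (y (m + 1) * y m) = 1947 := by
    intro m
    induction m with
    | zero =>
      refine ⟨?_, ?_, ?_⟩ <;> simp [hx0, hx1, hy0, hy1]
    | succ n ih =>
      obtain ⟨h1, h2, h3⟩ := ih
      have hx := hxr n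
      have hy := hyr n
      refine ⟨h2, ?_, ?_⟩
      · rw [hx, hy]; linear_combination 1684804 * h2 + h1 - 2596 * h3
      · rw [hx, hy]; linear_combination 1298 * h2 - h3
  intro m
  exact (key m).1
end

section
/- Let a be a positive integer divisible by 16 with a ≥ 2, and suppose 4a² − 3 = 13y² for some integer y. Set n = 4a³ − 3a − 1. Then sfp(n) ≤ a − 1, sfp(n + 1) ≤ 13a/16, and sfp(n + 2) ≤ a + 1; in particular max{sfp(n), sfp(n+1), sfp(n+2)} ≤ a + 1. -/
/-- The squarefree part of `n`: the smallest positive integer `a` such that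
`a ∣ n` and `n / a` is a perfect square. -/
noncomputable def sfp (n : ℕ) : ℕ := sInf {a : ℕ | 0 < a ∧ a ∣ n ∧ ∃ m : ℕ, n = a * m ^ 2}

lemma sfp_le {n d : ℕ} (hd : 0 < d) (m : ℕ) (h : n = d * m ^ 2) : sfp n ≤ d :=
  Nat.sInf_le ⟨hd, ⟨m ^ 2, h⟩, m, h⟩

theorem stmt9 (a : ℕ) (h16 : 16 ∣ a) (ha : 2 ≤ a) (y : ℤ)
    (hy : 4 * (a : ℤ) ^ 2 - 3 = 13 * y ^ 2)
    (n : ℕ) (hn : n = 4 * a ^ 3 - 3 * a - 1) :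
    sfp n ≤ a - 1 ∧ sfp (n + 1) ≤ 13 * a / 16 ∧ sfp (n + 2) ≤ a + 1 ∧
    max (sfp n) (max (sfp (n + 1)) (sfp (n + 2))) ≤ a + 1 := by
  obtain ⟨b, hb⟩ := h16
  set m := y.natAbs with hmdef
  have hm : (m : ℤ) ^ 2 = y ^ 2 := by rw [hmdef]; push_cast; exact sq_abs y
  have hab : (a : ℤ) = 16 * b := by exact_mod_cast congrArg (Nat.cast : ℕ → ℤ) hb
  have h2' : 3 * a ≤ 4 * a ^ 3 := by nlinarith
  have h1' : 1 ≤ 4 * a ^ 3 - 3 * a := by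
    have : 3 * a + 1 ≤ 4 * a ^ 3 := by nlinarith
    omega
  have hN : (n : ℤ) = 4 * (a : ℤ) ^ 3 - 3 * a - 1 := by
    subst hn
    push_cast [Nat.cast_sub h1', Nat.cast_sub h2']
    ring
  have h1 : n = (a - 1) * (2 * a + 1) ^ 2 := by
    have : (n : ℤ) = ((a - 1) * (2 * a + 1) ^ 2 : ℕ) := by
      push_cast [Nat.cast_sub (show 1 ≤ a by omega)]
      rw [hN]; ring
    exact_mod_cast this
  have h2 : n + 1 = (13 * b) * (4 * m) ^ 2 := by
    have : (n : ℤ) + 1 = ((13 * b) * (4 * m) ^ 2 : ℕ) := by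
      push_cast
      linear_combination hN + (a : ℤ) * hy - 13 * (a : ℤ) * hm + 13 * (m : ℤ) ^ 2 * hab
    exact_mod_cast this
  have h3 : n + 2 = (a + 1) * (2 * a - 1) ^ 2 := by
    have : (n : ℤ) + 2 = ((a + 1) * (2 * a - 1) ^ 2 : ℕ) := by
      push_cast [Nat.cast_sub (show 1 ≤ 2 * a by omega)]
      rw [hN]; ring
    exact_mod_cast this
  have hbpos : 0 < b := by omega
  have s1 : sfp n ≤ a - 1 := sfp_le (by omega) _ h1
  have s2 : sfp (n + 1) ≤ 13 * b := sfp_le (by omega) _ h2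
  have s3 : sfp (n + 2) ≤ a + 1 := sfp_le (by omega) _ h3
  have hdiv : 13 * a / 16 = 13 * b := by omega
  refine ⟨s1, hdiv ▸ s2, s3, ?_⟩
  simp only [max_le_iff]
  omega
end

section
/- Suppose positive integers n, a, b, c, x, y, z satisfy n = a·x², n + 1 = b·y², n + 2 = c·z². Let E be the elliptic curve Y² = X³ − (abc)²·X. Then the point (X, Y) = ((n+1)·abc, (abc)²·x·y·z) lies on E and has integer coordinates with Y ≠ 0. -/
theorem stmt13 (n a b c x y z : ℕ)
    (hn : 0 < n) (ha : 0 < a) (hb : 0 < b) (hc : 0 < c)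
    (hx : 0 < x) (hy : 0 < y) (hz : 0 < z)
    (h1 : n = a * x ^ 2) (h2 : n + 1 = b * y ^ 2) (h3 : n + 2 = c * z ^ 2) :
    (((a : ℤ) * b * c) ^ 2 * x * y * z) ^ 2 =
      (((n : ℤ) + 1) * ((a : ℤ) * b * c)) ^ 3 -
        ((a : ℤ) * b * c) ^ 2 * (((n : ℤ) + 1) * ((a : ℤ) * b * c)) ∧
    ((a : ℤ) * b * c) ^ 2 * x * y * z ≠ 0 := by
  have h1' : (n : ℤ) = a * x ^ 2 := by exact_mod_cast congrArg Nat.cast h1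
  have h2' : (n : ℤ) + 1 = b * y ^ 2 := by exact_mod_cast congrArg Nat.cast h2
  have h3' : (n : ℤ) + 2 = c * z ^ 2 := by exact_mod_cast congrArg Nat.cast h3
  constructor
  · have : ((n : ℤ) + 1) ^ 3 - (n + 1) = n * (n + 1) * (n + 2) := by ring
    calc ((((a : ℤ) * b * c) ^ 2 * x * y * z)) ^ 2
        = ((a : ℤ) * b * c) * ((a * x ^ 2) * (b * y ^ 2) * (c * z ^ 2)) * (a * b * c) ^ 2 := by
          ring
      _ = ((a : ℤ) * b * c) * (n * (n + 1) * (n + 2)) * (a * b * c) ^ 2 := by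
          rw [← h1', ← h2', ← h3']
      _ = (((n : ℤ) + 1) * ((a : ℤ) * b * c)) ^ 3 -
          ((a : ℤ) * b * c) ^ 2 * (((n : ℤ) + 1) * ((a : ℤ) * b * c)) := by ring
  · positivity
end

section
/- Suppose positive integers n, x, y, z satisfy n = 3x², n + 1 = y², n + 2 = 2z². Then n = 48. -/
set_option maxHeartbeats 1600000

section helpers

lemma nat_sq_of_coprime {a b c : ℕ} (hco : Nat.Coprime a b) (h : a * b = c ^ 2) :
    ∃ p, a = p ^ 2 := by
  have hico : IsCoprime (a : ℤ) (b : ℤ) := by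
    rw [Int.isCoprime_iff_gcd_eq_one, Int.gcd_natCast_natCast]; exact hco
  have heq : (a : ℤ) * b = (c : ℤ) ^ 2 := by exact_mod_cast h
  obtain ⟨a0, ha0 | ha0⟩ := Int.sq_of_isCoprime hico heq
  · exact ⟨a0.natAbs, by have := ha0; rw [← Int.natAbs_sq a0] at this; exact_mod_cast this⟩
  · have h1 : (a : ℤ) ≤ 0 := by rw [ha0]; exact neg_nonpos.mpr (sq_nonneg a0)
    have h2 : (0 : ℤ) ≤ a := Int.natCast_nonneg a
    have : a = 0 := by exact_mod_cast le_antisymm h1 h2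
    exact ⟨0, by simp [this]⟩

lemma nat_sq_fac {a b c : ℕ} (hco : Nat.Coprime a b) (h : a * b = c ^ 2) :
    ∃ p q, a = p ^ 2 ∧ b = q ^ 2 ∧ p * q = c := by
  obtain ⟨p, hp⟩ := nat_sq_of_coprime hco h
  obtain ⟨q, hq⟩ := nat_sq_of_coprime hco.symm (by rw [mul_comm]; exact h)
  refine ⟨p, q, hp, hq, ?_⟩
  have : (p * q) ^ 2 = c ^ 2 := by rw [mul_pow, ← hp, ← hq, h]
  exact Nat.pow_left_injective (by norm_num) this

lemma pyth_nat {a b c : ℕ} (h : a ^ 2 + b ^ 2 = c ^ 2) (hco : Nat.Coprime a b)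
    (ha : a % 2 = 1) :
    ∃ m n : ℕ, a + n ^ 2 = m ^ 2 ∧ b = 2 * m * n ∧ c = m ^ 2 + n ^ 2 ∧ Nat.Coprime m n ∧
      (m % 2 = 0 ∧ n % 2 = 1 ∨ m % 2 = 1 ∧ n % 2 = 0) := by
  have hT : PythagoreanTriple (a : ℤ) (b : ℤ) (c : ℤ) := by
    have : ((a : ℤ)) ^ 2 + (b : ℤ) ^ 2 = (c : ℤ) ^ 2 := by exact_mod_cast h
    unfold PythagoreanTriple; nlinarith [this]
  have hgcd : Int.gcd (a : ℤ) (b : ℤ) = 1 := by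
    rw [Int.gcd_natCast_natCast]; exact hco
  have hpar : (a : ℤ) % 2 = 1 := by omega
  have hcpos : 0 < c := by
    rcases Nat.eq_zero_or_pos c with hc | hc
    · exfalso; rw [hc] at h; simp at h; omega
    · exact hc
  have hcpos' : (0 : ℤ) < (c : ℤ) := by exact_mod_cast hcpos
  obtain ⟨m, n, h1, h2, h3, h4, h5, hm⟩ := hT.coprime_classification' hgcd hpar hcpos'
  have hapos : 1 ≤ a := by omega
  have hmpos : 0 < m := by
    rcases lt_or_eq_of_le hm with h' | h'
    · exact h'
    · exfalso
      have : (a : ℤ) = -n ^ 2 := by rw [h1, ← h']; ring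
      nlinarith [sq_nonneg n, (by exact_mod_cast hapos : (1:ℤ) ≤ (a:ℤ))]
  have hn : 0 ≤ n := by
    by_contra hneg
    push_neg at hneg
    have hb : (0 : ℤ) ≤ (b : ℤ) := Int.natCast_nonneg b
    nlinarith [h2]
  lift m to ℕ using hm with M
  lift n to ℕ using hn with N
  refine ⟨M, N, ?_, ?_, ?_, ?_, ?_⟩
  · exact_mod_cast (by linarith [h1] : (a : ℤ) + (N:ℤ) ^ 2 = (M:ℤ) ^ 2)
  · exact_mod_cast h2
  · exact_mod_cast h3
  · simpa [Int.gcd_natCast_natCast] using h4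
  · omega

lemma pow4_mod4_even {x : ℕ} (h : x % 2 = 0) : x ^ 4 % 4 = 0 := by
  obtain ⟨t, rfl⟩ : ∃ t, x = 2 * t := ⟨x / 2, by omega⟩
  have : (2 * t) ^ 4 = 4 * (4 * t ^ 4) := by ring
  rw [this, Nat.mul_mod_right]

lemma pow4_mod4_odd {x : ℕ} (h : x % 2 = 1) : x ^ 4 % 4 = 1 := by
  obtain ⟨t, rfl⟩ : ∃ t, x = 2 * t + 1 := ⟨x / 2, by omega⟩
  have : (2 * t + 1) ^ 4 = 4 * (4 * t ^ 4 + 8 * t ^ 3 + 6 * t ^ 2 + 2 * t) + 1 := by ring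
  rw [this, Nat.mul_add_mod]

lemma sq_mod4_even {x : ℕ} (h : x % 2 = 0) : x ^ 2 % 4 = 0 := by
  obtain ⟨t, rfl⟩ : ∃ t, x = 2 * t := ⟨x / 2, by omega⟩
  have : (2 * t) ^ 2 = 4 * t ^ 2 := by ring
  rw [this, Nat.mul_mod_right]

lemma sq_mod4_odd {x : ℕ} (h : x % 2 = 1) : x ^ 2 % 4 = 1 := by
  obtain ⟨t, rfl⟩ : ∃ t, x = 2 * t + 1 := ⟨x / 2, by omega⟩
  have : (2 * t + 1) ^ 2 = 4 * (t ^ 2 + t) + 1 := by ring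
  rw [this, Nat.mul_add_mod]

lemma lt_pow4' {g : ℕ} (h : 2 ≤ g) : g < g ^ 4 := by
  have h1 : g ^ 1 < g ^ 4 := Nat.pow_lt_pow_right (by omega) (by omega)
  simpa using h1

end helpers

/-- Fermat's right triangle theorem: `a^4 = b^4 + c^2` has no nontrivial solutions. -/
theorem rt (a : ℕ) : ∀ b c : ℕ, a ^ 4 = b ^ 4 + c ^ 2 → b = 0 ∨ c = 0 := by
  induction a using Nat.strong_induction_on with
  | _ a IH =>
  intro b c h
  by_cases hb : b = 0
  · exact Or.inl hb
  by_cases hc : c = 0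
  · exact Or.inr hc
  exfalso
  have hb1 : 1 ≤ b := Nat.pos_of_ne_zero hb
  have hc1 : 1 ≤ c := Nat.pos_of_ne_zero hc
  have hc2 : 1 ≤ c ^ 2 := Nat.one_le_pow _ _ hc1
  have hba : b < a := by
    by_contra hle
    push_neg at hle
    have : a ^ 4 ≤ b ^ 4 := Nat.pow_le_pow_left hle 4
    omega
  have ha2 : 2 ≤ a := by omega
  by_cases hg : Nat.gcd a b = 1
  · -- coprime case
    have hco : Nat.Coprime a b := hg
    have haodd : a % 2 = 1 := by
      by_contra h'
      have hae : a % 2 = 0 := by omega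
      have hbodd : b % 2 = 1 := by
        by_contra h''
        have hbe : b % 2 = 0 := by omega
        have h2 : 2 ∣ Nat.gcd a b :=
          Nat.dvd_gcd (Nat.dvd_of_mod_eq_zero hae) (Nat.dvd_of_mod_eq_zero hbe)
        rw [hg] at h2
        omega
      have hA := pow4_mod4_even hae
      have hB := pow4_mod4_odd hbodd
      have hC : c ^ 2 % 4 = 0 ∨ c ^ 2 % 4 = 1 := by
        rcases Nat.even_or_odd c with h' | h'
        · exact Or.inl (sq_mod4_even (Nat.even_iff.mp h'))
        · exact Or.inr (sq_mod4_odd (Nat.odd_iff.mp h'))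
      generalize hA4 : a ^ 4 = A at h hA
      generalize hB4 : b ^ 4 = B at h hB
      generalize hC4 : c ^ 2 = C at h hC
      omega
    have hbc : Nat.Coprime b c := by
      by_contra hne
      obtain ⟨p, hp, hpb, hpc⟩ := Nat.Prime.not_coprime_iff_dvd.mp hne
      have hpa : p ∣ a := by
        apply hp.dvd_of_dvd_pow (n := 4)
        rw [h]
        exact Nat.dvd_add (dvd_pow hpb (by norm_num)) (dvd_pow hpc (by norm_num))
      have hd : p ∣ Nat.gcd a b := Nat.dvd_gcd hpa hpb
      rw [hg] at hd
      have := Nat.le_of_dvd one_pos hd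
      have := hp.two_le
      omega
    rcases Nat.even_or_odd c with hcev | hcod
    · -- c even
      have hce : c % 2 = 0 := Nat.even_iff.mp hcev
      have hbodd : b % 2 = 1 := by
        by_contra h'
        have hbe : b % 2 = 0 := by omega
        have hA := pow4_mod4_odd haodd
        have hB := pow4_mod4_even hbe
        have hC := sq_mod4_even hce
        generalize hA4 : a ^ 4 = A at h hA
        generalize hB4 : b ^ 4 = B at h hB
        generalize hC4 : c ^ 2 = C at h hC
        omega
      have heq2 : (b ^ 2) ^ 2 + c ^ 2 = (a ^ 2) ^ 2 := by
        have e1 : (b ^ 2) ^ 2 = b ^ 4 := by ring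
        have e2 : (a ^ 2) ^ 2 = a ^ 4 := by ring
        omega
      have hco2' : Nat.Coprime (b ^ 2) c := Nat.Coprime.pow_left _ hbc
      have hb2odd : b ^ 2 % 2 = 1 := by
        have := sq_mod4_odd hbodd; omega
      obtain ⟨m, n, hm1, hm2, hm3, hmn, hpar⟩ := pyth_nat heq2 hco2' hb2odd
      have hn1 : 1 ≤ n := by
        rcases Nat.eq_zero_or_pos n with h0 | h0
        · exfalso; rw [h0, mul_zero] at hm2; exact hc hm2
        · exact h0
      have key : m ^ 4 = n ^ 4 + (a * b) ^ 2 := by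
        have e1 : ((b : ℤ)) ^ 2 + (n : ℤ) ^ 2 = (m : ℤ) ^ 2 := by exact_mod_cast hm1
        have e3 : ((a : ℤ)) ^ 2 = (m : ℤ) ^ 2 + (n : ℤ) ^ 2 := by exact_mod_cast hm3
        have : (m : ℤ) ^ 4 = (n : ℤ) ^ 4 + ((a : ℤ) * (b : ℤ)) ^ 2 := by
          linear_combination (-((m : ℤ) ^ 2 + (n : ℤ) ^ 2)) * e1 + (-((b : ℤ) ^ 2)) * e3
        exact_mod_cast this
      have hmlta : m < a := by
        by_contra h'
        push_neg at h'
        have h1 : a ^ 2 ≤ m ^ 2 := Nat.pow_le_pow_left h' 2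
        have h2 : 1 ≤ n ^ 2 := Nat.one_le_pow _ _ hn1
        omega
      rcases IH m hmlta n (a * b) key with h0 | h0
      · omega
      · rcases Nat.mul_eq_zero.mp h0 with h' | h' <;> omega
    · -- c odd
      have hco2 : c % 2 = 1 := Nat.odd_iff.mp hcod
      have hbe : b % 2 = 0 := by
        by_contra h'
        have hbo : b % 2 = 1 := by omega
        have hA := pow4_mod4_odd haodd
        have hB := pow4_mod4_odd hbo
        have hC := sq_mod4_odd hco2
        generalize hA4 : a ^ 4 = A at h hA
        generalize hB4 : b ^ 4 = B at h hB
        generalize hC4 : c ^ 2 = C at h hC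
        omega
      have heq2 : c ^ 2 + (b ^ 2) ^ 2 = (a ^ 2) ^ 2 := by
        have e1 : (b ^ 2) ^ 2 = b ^ 4 := by ring
        have e2 : (a ^ 2) ^ 2 = a ^ 4 := by ring
        omega
      have hcob : Nat.Coprime c (b ^ 2) := Nat.Coprime.pow_right _ hbc.symm
      obtain ⟨m, n, hm1, hm2, hm3, hmn, hpar⟩ := pyth_nat heq2 hcob hco2
      -- hm1 : c + n^2 = m^2, hm2 : b^2 = 2*m*n, hm3 : a^2 = m^2 + n^2
      have hn1 : 1 ≤ n := by
        rcases Nat.eq_zero_or_pos n with h0 | h0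
        · exfalso
          rw [h0, mul_zero] at hm2
          exact hb (Nat.pow_eq_zero.mp hm2).1
        · exact h0
      have hm1' : 1 ≤ m := by
        rcases Nat.eq_zero_or_pos m with h0 | h0
        · exfalso; rw [h0] at hm1; simp at hm1; omega
        · exact h0
      rcases hpar with ⟨hme, hno⟩ | ⟨hmo, hne⟩
      · -- m even, n odd
        obtain ⟨M, rfl⟩ : ∃ M, m = 2 * M := ⟨m / 2, by omega⟩
        obtain ⟨B, rfl⟩ : ∃ B, b = 2 * B := ⟨b / 2, by omega⟩
        have hBMn : M * n = B ^ 2 := by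
          have h4 : 4 * B ^ 2 = 4 * (M * n) := by
            calc 4 * B ^ 2 = (2 * B) ^ 2 := by ring
            _ = 2 * (2 * M) * n := hm2
            _ = 4 * (M * n) := by ring
          omega
        have hcoMn : Nat.Coprime M n := Nat.Coprime.coprime_dvd_left ⟨2, by ring⟩ hmn
        obtain ⟨α, β, hα, hβ, -⟩ := nat_sq_fac hcoMn hBMn
        have heq3 : n ^ 2 + (2 * M) ^ 2 = a ^ 2 := by linarith [hm3]
        obtain ⟨m', n', hq1, hq2, hq3, hq4, -⟩ := pyth_nat heq3 hmn.symm hno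
        -- hq1 : n + n'^2 = m'^2, hq2 : 2*M = 2*m'*n', hq3 : a = m'^2 + n'^2
        have hMn' : M = m' * n' := by
          have := hq2
          rw [mul_assoc] at this
          exact Nat.eq_of_mul_eq_mul_left two_pos this
        obtain ⟨γ, δ, hγ, hδ, -⟩ := nat_sq_fac hq4 (by rw [← hMn', hα] : m' * n' = α ^ 2)
        have key : γ ^ 4 = δ ^ 4 + β ^ 2 := by
          have e0 : n + n' ^ 2 = m' ^ 2 := hq1
          rw [hβ, hγ, hδ] at e0
          have e1 : (δ ^ 2) ^ 2 = δ ^ 4 := by ring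
          have e2 : (γ ^ 2) ^ 2 = γ ^ 4 := by ring
          linarith [e0, e1, e2]
        have hγpos : 1 ≤ γ := by
          rcases Nat.eq_zero_or_pos γ with h0 | h0
          · exfalso
            rw [h0] at key
            simp at key
            have : β ^ 2 = 0 := by omega
            have hβ0 : β = 0 := by
              rcases Nat.eq_zero_or_pos β with h' | h'
              · exact h'
              · exfalso; have := Nat.one_le_pow 2 β h'; omega
            rw [hβ0] at hβ; simp at hβ; omega
          · exact h0
        have hγlt : γ < a := by
          have hγ4 : γ ^ 4 ≤ a := by
            calc γ ^ 4 = (γ ^ 2) ^ 2 := by ring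
            _ = m' ^ 2 := by rw [hγ]
            _ ≤ m' ^ 2 + n' ^ 2 := Nat.le_add_right _ _
            _ = a := hq3.symm
          by_contra h'
          push_neg at h'
          have hγ2 : 2 ≤ γ := by omega
          have hlt : γ < γ ^ 4 := lt_pow4' hγ2
          omega
        rcases IH γ hγlt δ β key with h0 | h0
        · -- δ = 0
          rw [h0] at hδ
          simp at hδ
          rw [hδ, mul_zero] at hMn'
          rw [hMn'] at hBMn
          simp at hBMn
          have : B = 0 := by
            rcases Nat.eq_zero_or_pos B with h' | h'
            · exact h'
            · exfalso; have := Nat.one_le_pow 2 B h'; omega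
          omega
        · -- β = 0
          rw [h0] at hβ
          simp at hβ
          omega
      · -- m odd, n even
        obtain ⟨N, rfl⟩ : ∃ N, n = 2 * N := ⟨n / 2, by omega⟩
        obtain ⟨B, rfl⟩ : ∃ B, b = 2 * B := ⟨b / 2, by omega⟩
        have hBmN : m * N = B ^ 2 := by
          have h4 : 4 * B ^ 2 = 4 * (m * N) := by
            calc 4 * B ^ 2 = (2 * B) ^ 2 := by ring
            _ = 2 * m * (2 * N) := hm2
            _ = 4 * (m * N) := by ring
          omega
        have hcomN : Nat.Coprime m N := Nat.Coprime.coprime_dvd_right ⟨2, by ring⟩ hmn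
        obtain ⟨α, β, hα, hβ, -⟩ := nat_sq_fac hcomN hBmN
        have heq3 : m ^ 2 + (2 * N) ^ 2 = a ^ 2 := by linarith [hm3]
        obtain ⟨m', n', hq1, hq2, hq3, hq4, -⟩ := pyth_nat heq3 hmn hmo
        -- hq1 : m + n'^2 = m'^2, hq2 : 2*N = 2*m'*n', hq3 : a = m'^2 + n'^2
        have hNn' : N = m' * n' := by
          have := hq2
          rw [mul_assoc] at this
          exact Nat.eq_of_mul_eq_mul_left two_pos this
        obtain ⟨γ, δ, hγ, hδ, -⟩ := nat_sq_fac hq4 (by rw [← hNn', hβ] : m' * n' = β ^ 2)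
        have key : γ ^ 4 = δ ^ 4 + α ^ 2 := by
          have e0 : m + n' ^ 2 = m' ^ 2 := hq1
          rw [hα, hγ, hδ] at e0
          have e1 : (δ ^ 2) ^ 2 = δ ^ 4 := by ring
          have e2 : (γ ^ 2) ^ 2 = γ ^ 4 := by ring
          linarith [e0, e1, e2]
        have hγpos : 1 ≤ γ := by
          rcases Nat.eq_zero_or_pos γ with h0 | h0
          · exfalso
            rw [h0] at key
            simp at key
            have : α ^ 2 = 0 := by omega
            have hα0 : α = 0 := by
              rcases Nat.eq_zero_or_pos α with h' | h'
              · exact h'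
              · exfalso; have := Nat.one_le_pow 2 α h'; omega
            rw [hα0] at hα; simp at hα; omega
          · exact h0
        have hγlt : γ < a := by
          have hγ4 : γ ^ 4 ≤ a := by
            calc γ ^ 4 = (γ ^ 2) ^ 2 := by ring
            _ = m' ^ 2 := by rw [hγ]
            _ ≤ m' ^ 2 + n' ^ 2 := Nat.le_add_right _ _
            _ = a := hq3.symm
          by_contra h'
          push_neg at h'
          have hγ2 : 2 ≤ γ := by omega
          have hlt : γ < γ ^ 4 := lt_pow4' hγ2
          omega
        rcases IH γ hγlt δ α key with h0 | h0
        · -- δ = 0 : n' = 0 so N = 0, B^2 = 0, b = 0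
          rw [h0] at hδ
          simp at hδ
          rw [hδ, mul_zero] at hNn'
          rw [hNn', mul_zero] at hBmN
          have : B = 0 := by
            rcases Nat.eq_zero_or_pos B with h' | h'
            · exact h'
            · exfalso; have := Nat.one_le_pow 2 B h'; omega
          omega
        · -- α = 0 : m = 0
          rw [h0] at hα
          simp at hα
          omega
  · -- gcd > 1 descent
    have hgpos : 0 < Nat.gcd a b := Nat.gcd_pos_of_pos_right _ hb1
    have hg2 : 2 ≤ Nat.gcd a b := by omega
    obtain ⟨a', ha'⟩ := Nat.gcd_dvd_left a b
    obtain ⟨b', hb'⟩ := Nat.gcd_dvd_right a b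
    set g := Nat.gcd a b with hgdef
    have e1 : a ^ 4 = g ^ 4 * a' ^ 4 := by rw [ha']; ring
    have e2 : b ^ 4 = g ^ 4 * b' ^ 4 := by rw [hb']; ring
    have hdvd : g ^ 4 ∣ c ^ 2 := by
      have e : c ^ 2 = g ^ 4 * a' ^ 4 - g ^ 4 * b' ^ 4 := by omega
      rw [e]
      exact Nat.dvd_sub (Dvd.intro _ rfl) (Dvd.intro _ rfl)
    have hg2c : g ^ 2 ∣ c := by
      have h' : (g ^ 2) ^ 2 ∣ c ^ 2 := by
        have : (g ^ 2) ^ 2 = g ^ 4 := by ring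
        rwa [this]
      exact (Nat.pow_dvd_pow_iff (by norm_num)).mp h'
    obtain ⟨c', hc'⟩ := hg2c
    have e3 : c ^ 2 = g ^ 4 * c' ^ 2 := by rw [hc']; ring
    have heq' : a' ^ 4 = b' ^ 4 + c' ^ 2 := by
      have h4 : 0 < g ^ 4 := by positivity
      have : g ^ 4 * a' ^ 4 = g ^ 4 * (b' ^ 4 + c' ^ 2) := by
        rw [Nat.mul_add, ← e2, ← e3, ← e1]; exact h
      exact Nat.eq_of_mul_eq_mul_left h4 this
    have ha'pos : 0 < a' := by
      rcases Nat.eq_zero_or_pos a' with h0 | h0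
      · exfalso; rw [h0, mul_zero] at ha'; omega
      · exact h0
    have ha'lt : a' < a := by
      calc a' < 2 * a' := by omega
      _ ≤ g * a' := Nat.mul_le_mul_right _ hg2
      _ = a := ha'.symm
    rcases IH a' ha'lt b' c' heq' with h0 | h0
    · rw [h0, mul_zero] at hb'; exact hb hb'
    · rw [h0, mul_zero] at hc'; exact hc hc'

lemma nat_pow4_fac {a b c : ℕ} (hco : Nat.Coprime a b) (h : a * b = c ^ 4) :
    ∃ p q, a = p ^ 4 ∧ b = q ^ 4 := by
  obtain ⟨p, q, hp, hq, hpq⟩ := nat_sq_fac hco (c := c ^ 2) (by rw [h]; ring)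
  have hcopq : Nat.Coprime p q := by
    have h2 : Nat.Coprime (p ^ 2) (q ^ 2) := by rw [← hp, ← hq]; exact hco
    exact (Nat.coprime_pow_left_iff two_pos _ _).mp
      ((Nat.coprime_pow_right_iff two_pos _ _).mp h2)
  obtain ⟨s, t, hs, ht, -⟩ := nat_sq_fac hcopq hpq
  exact ⟨s, t, by rw [hp, hs]; ring, by rw [hq, ht]; ring⟩

lemma coprime_succ (k : ℕ) : Nat.Coprime (k + 1) k := by
  have := Nat.gcd_add_self_left 1 k
  simpa [Nat.Coprime] using this

/-- the key quartic: if `k+1 = v^2` and `k^2 + (k+1)^2 = z^2` then `v ≤ 2`. -/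
lemma key_quartic {v z k : ℕ} (hk : k + 1 = v ^ 2) (hz : z ^ 2 = k ^ 2 + (k + 1) ^ 2) :
    v ≤ 2 := by
  by_contra hv
  push_neg at hv
  have hv3 : 3 ≤ v := hv
  have hk8 : 9 ≤ k + 1 := by
    have : 3 ^ 2 ≤ v ^ 2 := Nat.pow_le_pow_left hv3 2
    omega
  rcases Nat.even_or_odd v with hve | hvo
  · -- v even, k odd
    have hve2 : v % 2 = 0 := Nat.even_iff.mp hve
    have hko : k % 2 = 1 := by
      have := sq_mod4_even hve2; omega
    have heq : k ^ 2 + (k + 1) ^ 2 = z ^ 2 := by omega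
    obtain ⟨m, n, hm1, hm2, hm3, hmn, hpar⟩ :=
      pyth_nat heq (coprime_succ k).symm hko
    -- hm1 : k + n^2 = m^2, hm2 : k+1 = 2*m*n
    have hn1 : 1 ≤ n := by
      rcases Nat.eq_zero_or_pos n with h0 | h0
      · rw [h0, mul_zero] at hm2; omega
      · exact h0
    have hnm : n < m := by
      by_contra h'
      push_neg at h'
      have := Nat.pow_le_pow_left h' 2
      omega
    obtain ⟨w, hwm, hw1⟩ : ∃ w, m = n + w ∧ 1 ≤ w := ⟨m - n, by omega, by omega⟩
    have hw2 : w ^ 2 + 1 = 2 * n ^ 2 := by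
      have e1 : (n + w) ^ 2 = n ^ 2 + 2 * (n * w) + w ^ 2 := by ring
      have e2 : 2 * (n + w) * n = 2 * n ^ 2 + 2 * (n * w) := by ring
      rw [hwm] at hm1 hm2
      omega
    have hwo : w % 2 = 1 := by omega
    have hno : n % 2 = 1 := by
      obtain ⟨j, rfl⟩ : ∃ j, w = 2 * j + 1 := ⟨w / 2, by omega⟩
      have e1 : (2 * j + 1) ^ 2 = 4 * (j ^ 2 + j) + 1 := by ring
      rcases Nat.even_or_odd n with hne | hno'
      · exfalso
        obtain ⟨t, rfl⟩ := hne
        have e2 : (t + t) ^ 2 = 2 * (2 * t ^ 2) := by ring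
        omega
      · exact Nat.odd_iff.mp hno'
    obtain ⟨l, hml⟩ : ∃ l, m = 2 * l := ⟨m / 2, by omega⟩
    have hl1 : 1 ≤ l := by omega
    obtain ⟨r, hvr⟩ : ∃ r, v = 2 * r := ⟨v / 2, by omega⟩
    have hnl : n * l = r ^ 2 := by
      have e1 : (2 * r) ^ 2 = 4 * r ^ 2 := by ring
      have e2 : 2 * (2 * l) * n = 4 * (n * l) := by ring
      rw [hvr] at hk
      rw [hml] at hm2
      omega
    have hconl : Nat.Coprime n l := by
      by_contra hne
      obtain ⟨p, hp, hpn, hpl⟩ := Nat.Prime.not_coprime_iff_dvd.mp hne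
      have hpm : p ∣ m := by rw [hml]; exact Dvd.dvd.mul_left hpl 2
      have : p ∣ Nat.gcd m n := Nat.dvd_gcd hpm hpn
      rw [hmn] at this
      have := Nat.le_of_dvd one_pos this
      have := hp.two_le
      omega
    obtain ⟨a1, b1, ha1, hb1, -⟩ := nat_sq_fac hconl hnl
    have ha11 : 1 ≤ a1 := by
      rcases Nat.eq_zero_or_pos a1 with h0 | h0
      · rw [h0] at ha1; simp at ha1; omega
      · exact h0
    have hb11 : 1 ≤ b1 := by
      rcases Nat.eq_zero_or_pos b1 with h0 | h0
      · rw [h0] at hb1; simp at hb1; omega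
      · exact h0
    -- X = a1^2 + 2 b1^2 satisfies X^2 = 8 b1^4 + 1
    have hwX : w + a1 ^ 2 = 2 * b1 ^ 2 := by
      have e : n + w = 2 * l := by omega
      rw [ha1, hb1] at e
      omega
    have hw4 : w ^ 2 + 1 = 2 * a1 ^ 4 := by
      have e1 : (a1 ^ 2) ^ 2 = a1 ^ 4 := by ring
      rw [ha1] at hw2
      omega
    set X := a1 ^ 2 + 2 * b1 ^ 2 with hXdef
    have hXd : X = w + 2 * a1 ^ 2 := by omega
    have hX : X ^ 2 = 8 * b1 ^ 4 + 1 := by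
      have e1 : (w + 2 * a1 ^ 2) ^ 2 = w ^ 2 + 4 * (a1 ^ 2 * w) + 4 * a1 ^ 4 := by ring
      have e2 : (w + a1 ^ 2) ^ 2 = w ^ 2 + 2 * (a1 ^ 2 * w) + a1 ^ 4 := by ring
      have e3 : (2 * b1 ^ 2) ^ 2 = 4 * b1 ^ 4 := by ring
      have e4 : (w + a1 ^ 2) ^ 2 = (2 * b1 ^ 2) ^ 2 := by rw [hwX]
      have e5 : X ^ 2 = (w + 2 * a1 ^ 2) ^ 2 := by rw [hXd]
      omega
    have hX3 : 3 ≤ X := by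
      have h1 : 1 ≤ b1 ^ 4 := Nat.one_le_pow _ _ hb11
      by_contra h'
      push_neg at h'
      have h2 : X ^ 2 ≤ 2 ^ 2 := Nat.pow_le_pow_left (by omega) 2
      omega
    have hXodd : X % 2 = 1 := by omega
    obtain ⟨Q, hQ⟩ : ∃ Q, X = 2 * Q + 1 := ⟨X / 2, by omega⟩
    have hQ1 : 1 ≤ Q := by omega
    have hPQ : Q * (Q + 1) = 2 * b1 ^ 4 := by
      have e1 : (2 * Q + 1) ^ 2 = 4 * (Q * (Q + 1)) + 1 := by ring
      rw [hQ] at hX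
      omega
    rcases Nat.even_or_odd Q with hQe | hQo
    · -- Q even : Q = 2Q', Q+1 = c^4, Q' = d^4, c^4 = 2 d^4 + 1
      have hQe2 : Q % 2 = 0 := Nat.even_iff.mp hQe
      obtain ⟨Q', hQ'⟩ : ∃ Q', Q = 2 * Q' := ⟨Q / 2, by omega⟩
      have hfac : (Q + 1) * Q' = b1 ^ 4 := by
        have e3 : Q * (Q + 1) = 2 * ((Q + 1) * Q') := by rw [hQ']; ring
        omega
      have hcop : Nat.Coprime (Q + 1) Q' := by
        by_contra hne
        obtain ⟨p, hp, hp1, hp2⟩ := Nat.Prime.not_coprime_iff_dvd.mp hne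
        have hpQ : p ∣ Q := by rw [hQ']; exact Dvd.dvd.mul_left hp2 2
        have : p ∣ 1 := by
          have := Nat.dvd_sub hp1 hpQ
          simpa using this
        have := Nat.le_of_dvd one_pos this
        have := hp.two_le
        omega
      obtain ⟨c, d, hc, hd⟩ := nat_pow4_fac hcop hfac
      have hd1 : 1 ≤ d := by
        rcases Nat.eq_zero_or_pos d with h0 | h0
        · exfalso; rw [h0] at hd; simp at hd; omega
        · exact h0
      have hc1 : 1 ≤ c := by
        rcases Nat.eq_zero_or_pos c with h0 | h0
        · exfalso; rw [h0] at hc; simp at hc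
        · exact h0
      have hc4 : c ^ 4 = 2 * d ^ 4 + 1 := by omega
      have hcodd : c % 2 = 1 := by
        rcases Nat.even_or_odd c with h0 | h0
        · exfalso
          obtain ⟨t, rfl⟩ := h0
          have : (t + t) ^ 4 = 2 * (8 * t ^ 4) := by ring
          omega
        · exact Nat.odd_iff.mp h0
      obtain ⟨t, rfl⟩ : ∃ t, c = 2 * t + 1 := ⟨c / 2, by omega⟩
      have ec2 : (2 * t + 1) ^ 2 = 4 * (t ^ 2 + t) + 1 := by ring
      set U := 4 * (t ^ 2 + t) with hUdef
      set e := 2 * (t ^ 2 + t) + 1 with hedef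
      have hUe : U * e = d ^ 4 := by
        have e1 : (2 * t + 1) ^ 4 = ((2 * t + 1) ^ 2) ^ 2 := by ring
        have e2 : (U + 1) ^ 2 = U ^ 2 + 2 * U + 1 := by ring
        have e3 : U * (2 * e) = 2 * (U * e) := by ring
        have e4 : U * (2 * e) = U ^ 2 + 2 * U := by rw [hedef, hUdef]; ring
        rw [e1, ec2] at hc4
        omega
      have hcoUe : Nat.Coprime U e := by
        by_contra hne
        obtain ⟨p, hp, hp1, hp2⟩ := Nat.Prime.not_coprime_iff_dvd.mp hne
        have hp2e : p ∣ 2 * e := Dvd.dvd.mul_left hp2 2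
        have hpd : p ∣ 2 := by
          have : 2 * e = U + 2 := by rw [hedef, hUdef]; ring
          rw [this] at hp2e
          have := Nat.dvd_sub hp2e hp1
          simpa using this
        have hp2' : p = 2 := by
          have := Nat.le_of_dvd two_pos hpd
          have := hp.two_le
          omega
        rw [hp2'] at hp2
        omega
      obtain ⟨p0, q0, hp0, hq0, -⟩ := nat_sq_fac (c := d ^ 2) hcoUe (by rw [hUe]; ring)
      -- U = p0^2, U + 1 = c^2 : consecutive squares
      have hcsq : (2 * t + 1) ^ 2 = p0 ^ 2 + 1 := by omega
      have hp0lt : p0 < 2 * t + 1 := by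
        by_contra h'
        push_neg at h'
        have := Nat.pow_le_pow_left h' 2
        omega
      have := Nat.pow_le_pow_left (show p0 + 1 ≤ 2 * t + 1 by omega) 2
      have e5 : (p0 + 1) ^ 2 = p0 ^ 2 + 2 * p0 + 1 := by ring
      have hp00 : p0 = 0 := by omega
      -- then U = 0, t = 0, c = 1, contradiction with d ≥ 1
      have hU0 : U = 0 := by rw [hp0, hp00]; ring
      have ht0 : t ^ 2 + t = 0 := by omega
      have : (2 * t + 1) ^ 4 = 1 := by
        have h0' : t ≤ t ^ 2 + t := Nat.le_add_left t _
        have : t = 0 := by omega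
        rw [this]; norm_num
      omega
    · -- Q odd : Q = c^4, Q + 1 = 2 d^4, 2 d^4 = c^4 + 1
      have hQodd : Q % 2 = 1 := Nat.odd_iff.mp hQo
      obtain ⟨P', hP'⟩ : ∃ P', Q + 1 = 2 * P' := ⟨(Q + 1) / 2, by omega⟩
      have hfac : Q * P' = b1 ^ 4 := by
        have e1 : Q * (2 * P') = 2 * (Q * P') := by ring
        rw [hP'] at hPQ
        omega
      have hcop : Nat.Coprime Q P' := by
        by_contra hne
        obtain ⟨p, hp, hp1, hp2⟩ := Nat.Prime.not_coprime_iff_dvd.mp hne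
        have hpQ1 : p ∣ Q + 1 := by rw [hP']; exact Dvd.dvd.mul_left hp2 2
        have : p ∣ 1 := by
          have := Nat.dvd_sub hpQ1 hp1
          simpa using this
        have := Nat.le_of_dvd one_pos this
        have := hp.two_le
        omega
      obtain ⟨c, d, hc, hd⟩ := nat_pow4_fac hcop hfac
      have hc1 : 1 ≤ c := by
        rcases Nat.eq_zero_or_pos c with h0 | h0
        · exfalso; rw [h0] at hc; simp at hc; omega
        · exact h0
      have h2d : 2 * d ^ 4 = c ^ 4 + 1 := by omega
      obtain ⟨E, hE⟩ : ∃ E, c ^ 4 = 2 * E + 1 := ⟨Q / 2, by omega⟩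
      have hd4 : d ^ 4 = E + 1 := by omega
      have hrt : (d ^ 2) ^ 4 = c ^ 4 + E ^ 2 := by
        have i1 : (d ^ 2) ^ 4 = (d ^ 4) ^ 2 := by ring
        have i2 : (E + 1) ^ 2 = E ^ 2 + 2 * E + 1 := by ring
        have i3 : (d ^ 4) ^ 2 = (E + 1) ^ 2 := by rw [hd4]
        omega
      rcases rt (d ^ 2) c E hrt with h0 | h0
      · omega
      · -- E = 0 : c^4 = 1, Q = 1, X = 3, so a1 = b1 = 1, k+1 = 4 < 9
        rw [h0] at hE
        have hQ1' : Q = 1 := by omega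
        have hX3' : X = 3 := by omega
        have ea : 1 ≤ a1 ^ 2 := Nat.one_le_pow _ _ ha11
        have eb : 1 ≤ b1 ^ 2 := Nat.one_le_pow _ _ hb11
        have ha12 : a1 ^ 2 = 1 := by omega
        have hb12 : b1 ^ 2 = 1 := by omega
        rw [ha12] at ha1
        rw [hb12] at hb1
        rw [hml, hb1, ha1] at hm2
        omega
  · -- v odd, k+1 odd, k even
    have hvo2 : v % 2 = 1 := Nat.odd_iff.mp hvo
    have hko : (k + 1) % 2 = 1 := by
      have := sq_mod4_odd hvo2; omega
    have heq : (k + 1) ^ 2 + k ^ 2 = z ^ 2 := by omega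
    obtain ⟨m, n, hm1, hm2, hm3, hmn, hpar⟩ :=
      pyth_nat heq (coprime_succ k) hko
    -- hm1 : (k+1) + n^2 = m^2, hm2 : k = 2*m*n
    have hn1 : 1 ≤ n := by
      rcases Nat.eq_zero_or_pos n with h0 | h0
      · rw [h0, mul_zero] at hm2; omega
      · exact h0
    have hnm : n < m := by
      by_contra h'
      push_neg at h'
      have := Nat.pow_le_pow_left h' 2
      omega
    obtain ⟨w, hwm, hw1⟩ : ∃ w, m = n + w ∧ 1 ≤ w := ⟨m - n, by omega, by omega⟩
    have hw2 : w ^ 2 = 2 * n ^ 2 + 1 := by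
      have e1 : (n + w) ^ 2 = n ^ 2 + 2 * (n * w) + w ^ 2 := by ring
      have e2 : 2 * (n + w) * n = 2 * n ^ 2 + 2 * (n * w) := by ring
      rw [hwm] at hm1 hm2
      omega
    have hwo : w % 2 = 1 := by omega
    have hfac : w * (w + 2 * n) = v ^ 2 := by
      have e1 : (n + w) ^ 2 = n ^ 2 + (w * (w + 2 * n)) := by ring
      rw [hwm] at hm1
      omega
    have hcop : Nat.Coprime w (w + 2 * n) := by
      by_contra hne
      obtain ⟨p, hp, hp1, hp2⟩ := Nat.Prime.not_coprime_iff_dvd.mp hne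
      have hp2n : p ∣ 2 * n := by
        have := Nat.dvd_sub hp2 hp1
        simpa using this
      have hpne2 : p ≠ 2 := by
        rintro rfl
        obtain ⟨t, ht⟩ := hp1
        omega
      have hpn : p ∣ n := by
        rcases (Nat.Prime.dvd_mul hp).mp hp2n with h' | h'
        · exfalso
          have := Nat.le_of_dvd two_pos h'
          have := hp.two_le
          omega
        · exact h'
      have hpm : p ∣ m := by rw [hwm]; exact Nat.dvd_add hpn hp1
      have : p ∣ Nat.gcd m n := Nat.dvd_gcd hpm hpn
      rw [hmn] at this
      have := Nat.le_of_dvd one_pos this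
      have := hp.two_le
      omega
    obtain ⟨s, t', hs, ht', -⟩ := nat_sq_fac hcop hfac
    have hs1 : 1 ≤ s := by
      rcases Nat.eq_zero_or_pos s with h0 | h0
      · exfalso; rw [h0] at hs; simp at hs; omega
      · exact h0
    have hsodd : s % 2 = 1 := by
      rcases Nat.even_or_odd s with h0 | h0
      · exfalso
        obtain ⟨u, rfl⟩ := h0
        have : (u + u) ^ 2 = 2 * (2 * u ^ 2) := by ring
        omega
      · exact Nat.odd_iff.mp h0
    have hs4 : s ^ 4 = 2 * n ^ 2 + 1 := by
      have e1 : s ^ 4 = (s ^ 2) ^ 2 := by ring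
      rw [e1, ← hs]
      exact hw2
    obtain ⟨j, rfl⟩ : ∃ j, s = 2 * j + 1 := ⟨s / 2, by omega⟩
    have es2 : (2 * j + 1) ^ 2 = 4 * (j ^ 2 + j) + 1 := by ring
    set U := 4 * (j ^ 2 + j) with hUdef
    set e := 2 * (j ^ 2 + j) + 1 with hedef
    have hUe : U * e = n ^ 2 := by
      have e1 : (2 * j + 1) ^ 4 = ((2 * j + 1) ^ 2) ^ 2 := by ring
      have e2 : (U + 1) ^ 2 = U ^ 2 + 2 * U + 1 := by ring
      have e4 : U * (2 * e) = U ^ 2 + 2 * U := by rw [hedef, hUdef]; ring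
      have e5 : U * (2 * e) = 2 * (U * e) := by ring
      rw [e1, es2] at hs4
      omega
    have hcoUe : Nat.Coprime U e := by
      by_contra hne
      obtain ⟨p, hp, hp1, hp2⟩ := Nat.Prime.not_coprime_iff_dvd.mp hne
      have hp2e : p ∣ 2 * e := Dvd.dvd.mul_left hp2 2
      have hpd : p ∣ 2 := by
        have h2e : 2 * e = U + 2 := by rw [hedef, hUdef]; ring
        rw [h2e] at hp2e
        have := Nat.dvd_sub hp2e hp1
        simpa using this
      have hp2' : p = 2 := by
        have := Nat.le_of_dvd two_pos hpd
        have := hp.two_le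
        omega
      rw [hp2'] at hp2
      omega
    obtain ⟨p0, q0, hp0, hq0, -⟩ := nat_sq_fac hcoUe hUe
    have hcsq : (2 * j + 1) ^ 2 = p0 ^ 2 + 1 := by omega
    have hp0lt : p0 < 2 * j + 1 := by
      by_contra h'
      push_neg at h'
      have := Nat.pow_le_pow_left h' 2
      omega
    have := Nat.pow_le_pow_left (show p0 + 1 ≤ 2 * j + 1 by omega) 2
    have e5 : (p0 + 1) ^ 2 = p0 ^ 2 + 2 * p0 + 1 := by ring
    have hp00 : p0 = 0 := by omega
    have hU0 : U = 0 := by rw [hp0, hp00]; ring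
    have hj0 : j = 0 := by
      have h0' : j ≤ j ^ 2 + j := Nat.le_add_left j _
      omega
    rw [hj0] at hs4
    norm_num at hs4
    omega

theorem stmt14 (n x y z : ℕ) (hn : 0 < n) (hx : 0 < x) (hy : 0 < y) (hz : 0 < z)
    (h1 : n = 3 * x ^ 2) (h2 : n + 1 = y ^ 2) (h3 : n + 2 = 2 * z ^ 2) :
    n = 48 := by
  have hyodd : y % 2 = 1 := by
    rcases Nat.even_or_odd y with h0 | h0
    · exfalso
      obtain ⟨t, rfl⟩ := h0
      have e : (t + t) ^ 2 = 2 * (2 * t ^ 2) := by ring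
      omega
    · exact Nat.odd_iff.mp h0
  obtain ⟨k, rfl⟩ : ∃ k, y = 2 * k + 1 := ⟨y / 2, by omega⟩
  have ey : (2 * k + 1) ^ 2 = 4 * (k ^ 2 + k) + 1 := by ring
  have hk1 : 1 ≤ k := by
    rcases Nat.eq_zero_or_pos k with h0 | h0
    · exfalso
      rw [h0] at h2
      norm_num at h2
      omega
    · exact h0
  have h3x : 3 * x ^ 2 = 4 * (k ^ 2 + k) := by omega
  have hxe : x % 2 = 0 := by
    rcases Nat.even_or_odd x with h0 | h0
    · exact Nat.even_iff.mp h0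
    · exfalso
      have := sq_mod4_odd (Nat.odd_iff.mp h0)
      omega
  obtain ⟨a, rfl⟩ : ∃ a, x = 2 * a := ⟨x / 2, by omega⟩
  have hka : k * (k + 1) = 3 * a ^ 2 := by
    have e1 : (2 * a) ^ 2 = 4 * a ^ 2 := by ring
    have e2 : k * (k + 1) = k ^ 2 + k := by ring
    omega
  have hz2 : z ^ 2 = k ^ 2 + (k + 1) ^ 2 := by
    have e1 : (k + 1) ^ 2 = k ^ 2 + 2 * k + 1 := by ring
    omega
  have h3k : k % 3 = 0 ∨ k % 3 = 2 := by
    rcases (show k % 3 = 0 ∨ k % 3 = 1 ∨ k % 3 = 2 by omega) with h0 | h0 | h0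
    · exact Or.inl h0
    · exfalso
      obtain ⟨t, rfl⟩ : ∃ t, k = 3 * t + 1 := ⟨k / 3, by omega⟩
      have e : (3 * t + 1) * (3 * t + 1 + 1) = 3 * (3 * t ^ 2 + 3 * t) + 2 := by ring
      omega
    · exact Or.inr h0
  rcases h3k with hmod | hmod
  · -- 3 ∣ k
    obtain ⟨m, rfl⟩ : ∃ m, k = 3 * m := ⟨k / 3, by omega⟩
    have hfac : m * (3 * m + 1) = a ^ 2 := by
      have e : (3 * m) * (3 * m + 1) = 3 * (m * (3 * m + 1)) := by ring
      omega
    have hcop : Nat.Coprime m (3 * m + 1) :=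
      Nat.Coprime.coprime_dvd_left ⟨3, by ring⟩ (coprime_succ (3 * m)).symm
    obtain ⟨u, v, hu, hv, -⟩ := nat_sq_fac hcop hfac
    have hkey : v ≤ 2 := key_quartic (by omega : 3 * m + 1 = v ^ 2) hz2
    have hm1 : 1 ≤ m := by omega
    interval_cases v
    · norm_num at hv
    · norm_num at hv; omega
    · norm_num at hv
      have hm : m = 1 := by omega
      subst hm
      norm_num at h2
      omega
  · -- 3 ∣ k + 1 : impossible
    exfalso
    obtain ⟨m, rfl⟩ : ∃ m, k = 3 * m + 2 := ⟨k / 3, by omega⟩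
    have hfac : (3 * m + 2) * (m + 1) = a ^ 2 := by
      have e : (3 * m + 2) * (3 * m + 2 + 1) = 3 * ((3 * m + 2) * (m + 1)) := by ring
      omega
    have hcop : Nat.Coprime (3 * m + 2) (m + 1) :=
      Nat.Coprime.coprime_dvd_right ⟨3, by ring⟩ (coprime_succ (3 * m + 2)).symm
    obtain ⟨u, w', hu, hw', -⟩ := nat_sq_fac hcop hfac
    obtain ⟨s, hs⟩ : ∃ s, u = 3 * s ∨ u = 3 * s + 1 ∨ u = 3 * s + 2 := ⟨u / 3, by omega⟩
    rcases hs with rfl | rfl | rfl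
    · have e : (3 * s) ^ 2 = 3 * (3 * s ^ 2) := by ring
      omega
    · have e : (3 * s + 1) ^ 2 = 3 * (3 * s ^ 2 + 2 * s) + 1 := by ring
      omega
    · have e : (3 * s + 2) ^ 2 = 3 * (3 * s ^ 2 + 4 * s + 1) + 1 := by ring
      omega
end

section
/- n = 9841094 satisfies sfp(9841094) = 134, sfp(9841095) = 55, and sfp(9841096) = 34. -/
lemma sf_unique {d e k j : ℕ} (hd : Squarefree d) (he : Squarefree e)
    (hk : k ≠ 0) (hj : j ≠ 0) (h : d * k ^ 2 = e * j ^ 2) : d = e := by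
  have hd0 : d ≠ 0 := hd.ne_zero
  have he0 : e ≠ 0 := he.ne_zero
  apply Nat.eq_of_factorization_eq hd0 he0
  intro p
  have h1 : (d * k ^ 2).factorization p = (e * j ^ 2).factorization p := by rw [h]
  rw [Nat.factorization_mul hd0 (pow_ne_zero 2 hk),
      Nat.factorization_mul he0 (pow_ne_zero 2 hj),
      Nat.factorization_pow, Nat.factorization_pow] at h1
  simp only [Finsupp.add_apply, Finsupp.smul_apply, smul_eq_mul] at h1
  have hdp : d.factorization p ≤ 1 := by
    by_cases hp : p.Prime
    · exact (Nat.squarefree_iff_factorization_le_one hd0).mp hd p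
    · simp [Nat.factorization_eq_zero_of_not_prime d hp]
  have hep : e.factorization p ≤ 1 := by
    by_cases hp : p.Prime
    · exact (Nat.squarefree_iff_factorization_le_one he0).mp he p
    · simp [Nat.factorization_eq_zero_of_not_prime e hp]
  omega

lemma sqfree_pq {p q : ℕ} (hp : p.Prime) (hq : q.Prime) (h : p ≠ q) : Squarefree (p * q) :=
  (Nat.squarefree_mul ((Nat.coprime_primes hp hq).mpr h)).mpr ⟨hp.squarefree, hq.squarefree⟩

lemma sfp_eq {d k : ℕ} (hd : Squarefree d) (hk : 0 < k) : sfp (d * k ^ 2) = d := by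
  unfold sfp
  have hmem : d ∈ {a : ℕ | 0 < a ∧ a ∣ d * k ^ 2 ∧ ∃ m : ℕ, d * k ^ 2 = a * m ^ 2} :=
    ⟨hd.ne_zero.bot_lt, Dvd.intro _ rfl, ⟨k, rfl⟩⟩
  apply le_antisymm
  · exact Nat.sInf_le hmem
  · apply le_csInf ⟨d, hmem⟩
    rintro a ⟨ha0, -, m, hm⟩
    obtain ⟨s, b, hsb, hs⟩ := Nat.sq_mul_squarefree a
    have hb : b ≠ 0 := by
      rintro rfl; simp at hsb; omega
    have hm0 : m ≠ 0 := by
      rintro rfl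
      simp [mul_eq_zero] at hm
      rcases hm with h | h
      · exact hd.ne_zero h
      · exact hk.ne' h
    have : d * k ^ 2 = s * (b * m) ^ 2 := by
      rw [hm, ← hsb]; ring
    have hds : d = s := sf_unique hd hs hk.ne' (mul_ne_zero hb hm0) this
    calc d = s := hds
      _ ≤ b ^ 2 * s := Nat.le_mul_of_pos_left s (Nat.pow_pos (Nat.pos_of_ne_zero hb))
      _ = a := hsb

theorem stmt16 : sfp 9841094 = 134 ∧ sfp 9841095 = 55 ∧ sfp 9841096 = 34 := by
  refine ⟨?_, ?_, ?_⟩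
  · have h134 : Squarefree 134 := by
      have := sqfree_pq (p := 2) (q := 67) (by norm_num) (by norm_num) (by norm_num)
      norm_num at this; exact this
    have : (9841094 : ℕ) = 134 * 271 ^ 2 := by norm_num
    rw [this, sfp_eq h134 (by norm_num)]
  · have h55 : Squarefree 55 := by
      have := sqfree_pq (p := 5) (q := 11) (by norm_num) (by norm_num) (by norm_num)
      norm_num at this; exact this
    have : (9841095 : ℕ) = 55 * 423 ^ 2 := by norm_num
    rw [this, sfp_eq h55 (by norm_num)]
  · have h34 : Squarefree 34 := by
      have := sqfree_pq (p := 2) (q := 17) (by norm_num) (by norm_num) (by norm_num)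
      norm_num at this; exact this
    have : (9841096 : ℕ) = 34 * 538 ^ 2 := by norm_num
    rw [this, sfp_eq h34 (by norm_num)]
end
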